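/- There exists R₀ > 0 such that for all R ≥ R₀, ∫_{√R}^{R} (ln(R+1) − ln(r+1))·(r/(r+1)²) dr ≥ (1/9)·ln²(R+1). -/

import Mathlib

open Real MeasureTheory intervalIntegral

set_option maxHeartbeats 1000000 in
theorem stmt_14 :
    ∃ R₀ : ℝ, 0 < R₀ ∧
      ∀ R : ℝ, R₀ ≤ R →
        (1 / 9) * (Real.log (R + 1)) ^ 2
          ≤ ∫ r in (Real.sqrt R)..R,
              (Real.log (R + 1) - Real.log (r + 1)) * (r / (r + 1) ^ 2) := by
  refine ⟨Real.exp 40, Real.exp_pos 40, ?_⟩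
  intro R hR
  have hRpos : (0:ℝ) < R := lt_of_lt_of_le (Real.exp_pos 40) hR
  have hR1 : (1:ℝ) ≤ R := le_trans (by
    have := Real.one_le_exp (by norm_num : (0:ℝ) ≤ 40); linarith) hR
  set s := Real.sqrt R with hs
  have hspos : 0 < s := Real.sqrt_pos.mpr hRpos
  have hsleR : s ≤ R := by
    calc s ≤ Real.sqrt (R^2) := Real.sqrt_le_sqrt (by nlinarith)
    _ = R := Real.sqrt_sq (le_of_lt hRpos)
  set L := Real.log (R+1) with hLdef
  set F : ℝ → ℝ := fun r =>
    L * Real.log (r+1) - (Real.log (r+1))^2/2 + (L - Real.log (r+1) - 1)/(r+1) with hFdef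
  have huIcc : Set.uIcc s R = Set.Icc s R := Set.uIcc_of_le hsleR
  have hderiv : ∀ r ∈ Set.uIcc s R,
      HasDerivAt F ((L - Real.log (r+1)) * (r/(r+1)^2)) r := by
    intro r hr
    rw [huIcc] at hr
    have hr1 : 0 < r + 1 := by have := hr.1; linarith
    have h1 : HasDerivAt (fun x : ℝ => Real.log (x+1)) (1/(r+1)) r := by
      have := (Real.hasDerivAt_log (ne_of_gt hr1)).comp r
        ((hasDerivAt_id r).add_const 1)
      simpa [one_div, Function.comp_def] using this
    have hd : HasDerivAt (fun x : ℝ => x + 1) 1 r := (hasDerivAt_id r).add_const 1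
    have hnum : HasDerivAt (fun x : ℝ => L - Real.log (x+1) - 1) (-(1/(r+1))) r := by
      simpa using ((h1.const_sub L).sub_const 1)
    have hquot : HasDerivAt (fun x : ℝ => (L - Real.log (x+1) - 1)/(x+1))
        (((-(1/(r+1))) * (r+1) - (L - Real.log (r+1) - 1) * 1)/((r+1)^2)) r :=
      hnum.div hd (ne_of_gt hr1)
    have hsq : HasDerivAt (fun x : ℝ => (Real.log (x+1))^2/2)
        ((2 * Real.log (r+1) ^ 1 * (1/(r+1)))/2) r := (h1.pow 2).div_const 2
    have hall := ((h1.const_mul L).sub hsq).add hquot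
    refine HasDerivAt.congr_deriv hall ?_
    have hne : r + 1 ≠ 0 := ne_of_gt hr1
    field_simp
    ring
  have hcont : ContinuousOn (fun r => (L - Real.log (r+1)) * (r/(r+1)^2)) (Set.uIcc s R) := by
    intro r hr
    rw [huIcc] at hr
    have hr1 : 0 < r + 1 := by have := hr.1; linarith
    apply ContinuousAt.continuousWithinAt
    have hadd : ContinuousAt (fun x : ℝ => x + 1) r := by fun_prop
    have hlog : ContinuousAt (fun x : ℝ => Real.log (x+1)) r :=
      hadd.log (ne_of_gt hr1)
    exact (continuousAt_const.sub hlog).mul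
      (continuousAt_id.div (by fun_prop) (by positivity))
  have hint := intervalIntegral.integral_eq_sub_of_hasDerivAt hderiv
    (hcont.intervalIntegrable)
  rw [hint]
  -- now the algebraic inequality
  set ℓ := Real.log (s+1) with hldef
  have hL40 : (40:ℝ) ≤ L := by
    calc (40:ℝ) = Real.log (Real.exp 40) := (Real.log_exp 40).symm
    _ ≤ L := Real.log_le_log (Real.exp_pos 40) (by linarith)
  have hlnonneg : 0 ≤ ℓ := Real.log_nonneg (by linarith)
  have hsqrtR1 : Real.sqrt (R+1) ≤ s + 1 := by
    have h : R + 1 ≤ (s+1)^2 := by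
      have := Real.sq_sqrt (le_of_lt hRpos)
      nlinarith [Real.sqrt_nonneg R]
    calc Real.sqrt (R+1) ≤ Real.sqrt ((s+1)^2) := Real.sqrt_le_sqrt h
    _ = s + 1 := Real.sqrt_sq (by positivity)
  have hlogsqrt : Real.log (Real.sqrt (R+1)) = L / 2 := by
    rw [Real.log_sqrt (by linarith)]
  have hl_le : ℓ ≤ Real.log 2 + L/2 := by
    have h1 : s + 1 ≤ 2 * Real.sqrt (R+1) := by
      have hs1 : s ≤ Real.sqrt (R+1) := Real.sqrt_le_sqrt (by linarith)
      have h2 : (1:ℝ) ≤ Real.sqrt (R+1) := by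
        have := Real.sqrt_le_sqrt (show (1:ℝ) ≤ R+1 by linarith)
        rwa [Real.sqrt_one] at this
      linarith
    calc ℓ ≤ Real.log (2 * Real.sqrt (R+1)) :=
        Real.log_le_log (by positivity) h1
    _ = Real.log 2 + L/2 := by
        rw [Real.log_mul (by norm_num) (by positivity), hlogsqrt]
  have hLle : L ≤ 2 * (s + 1) := by
    have h1 : L = 2 * Real.log (Real.sqrt (R+1)) := by rw [hlogsqrt]; ring
    have h2 : Real.log (Real.sqrt (R+1)) ≤ Real.sqrt (R+1) - 1 :=
      Real.log_le_sub_one_of_pos (by positivity)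
    nlinarith
  have hB : (L - ℓ - 1)/(s+1) ≤ 2 := by
    rw [div_le_iff₀ (by positivity)]
    linarith
  have hA : (L - L - 1)/(R+1) = -(1/(R+1)) := by ring
  have hA' : -(1:ℝ) ≤ -(1/(R+1)) := by
    have h1 : 1/(R+1) ≤ 1 := by
      rw [div_le_one (by linarith)]; linarith
    linarith
  have hlog2 : Real.log 2 ≤ 0.7 := by
    have := Real.log_two_lt_d9
    linarith
  simp only [hFdef]
  rw [hA]
  have hcore : L/2 - 0.7 ≤ L - ℓ := by linarith
  have hcore2 : (0:ℝ) ≤ L/2 - 0.7 := by linarith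
  have hsq : (L/2 - 0.7)^2 ≤ (L - ℓ)^2 := by nlinarith
  nlinarith [hsq, hL40, hB, hA', sq_nonneg (L - 40)]
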